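/- arXiv:1811.04336 — 2 statements merged into one kernel-verified Lean document; each statement's English description precedes it below -/
import Mathlib

section
/- Let G be a finite connected simple graph with an injective edge-weight function w, and let T be the (unique) minimum-weight spanning tree of G. Then for every edge e = uv of G, e is not an edge of T if and only if there exists a path in G between u and v all of whose edges have weight strictly less than w(e). -/
open SimpleGraph Finset

variable {V : Type*}

/-- `T` is a spanning tree of `G`: a subgraph on the same vertex set that is a tree. -/
def IsSpanningTree (G T : SimpleGraph V) : Prop :=
  T ≤ G ∧ T.IsTree

/-- The total weight of the edges of a graph. -/
noncomputable def totalWeight [Fintype V] (T : SimpleGraph V) (w : Sym2 V → ℝ) : ℝ :=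
  ∑ e ∈ T.edgeSet.toFinite.toFinset, w e

/-- `T` is a minimum-weight spanning tree of `G` with respect to `w`. -/
def IsMinSpanningTree [Fintype V] (G T : SimpleGraph V) (w : Sym2 V → ℝ) : Prop :=
  IsSpanningTree G T ∧
    ∀ T' : SimpleGraph V, IsSpanningTree G T' → totalWeight T w ≤ totalWeight T' w

/-- Key induction: a walk in `H` either survives the deletion of `s(u,v)`, or it crosses
that edge in one of the two directions. -/
private lemma reach_of_delete_aux {H : SimpleGraph V} {u v : V} :
    ∀ {x z : V}, H.Walk x z →
      (H.deleteEdges {s(u, v)}).Reachable x z ∨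
      ((H.deleteEdges {s(u, v)}).Reachable x u ∧ (H.deleteEdges {s(u, v)}).Reachable v z) ∨
      ((H.deleteEdges {s(u, v)}).Reachable x v ∧ (H.deleteEdges {s(u, v)}).Reachable u z) := by
  intro x z p
  induction p with
  | nil => exact Or.inl (Reachable.refl _)
  | @cons x y z hadj q ih =>
    by_cases hxy : s(x, y) = s(u, v)
    · rw [Sym2.eq_iff] at hxy
      rcases hxy with ⟨rfl, rfl⟩ | ⟨rfl, rfl⟩
      · rcases ih with h | ⟨h1, h2⟩ | ⟨h1, h2⟩
        · exact Or.inr (Or.inl ⟨Reachable.refl _, h⟩)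
        · exact Or.inr (Or.inl ⟨Reachable.refl _, h2⟩)
        · exact Or.inl h2
      · rcases ih with h | ⟨h1, h2⟩ | ⟨h1, h2⟩
        · exact Or.inr (Or.inr ⟨Reachable.refl _, h⟩)
        · exact Or.inl h2
        · exact Or.inr (Or.inr ⟨Reachable.refl _, h2⟩)
    · have hadj' : (H.deleteEdges {s(u, v)}).Adj x y := by
        rw [SimpleGraph.deleteEdges_adj]
        exact ⟨hadj, by simpa using hxy⟩
      rcases ih with h | ⟨h1, h2⟩ | ⟨h1, h2⟩
      · exact Or.inl (hadj'.reachable.trans h)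
      · exact Or.inr (Or.inl ⟨hadj'.reachable.trans h1, h2⟩)
      · exact Or.inr (Or.inr ⟨hadj'.reachable.trans h1, h2⟩)

/-- After deleting the edge `s(u,v)`, any vertex that could reach `u` can still reach
`u` or `v`. -/
private lemma reach_of_delete {H : SimpleGraph V} {u v x : V} (h : H.Reachable x u) :
    (H.deleteEdges {s(u, v)}).Reachable x u ∨ (H.deleteEdges {s(u, v)}).Reachable x v := by
  obtain ⟨p⟩ := h
  rcases reach_of_delete_aux p with h | ⟨h1, _⟩ | ⟨h1, _⟩
  · exact Or.inl h
  · exact Or.inl h1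
  · exact Or.inr h1

/-- A walk from inside `S` to outside `S` crosses the boundary of `S`. -/
private lemma exists_boundary {G : SimpleGraph V} (S : Set V) :
    ∀ {u v : V} (p : G.Walk u v), u ∈ S → v ∉ S →
      ∃ a b : V, G.Adj a b ∧ s(a, b) ∈ p.edges ∧ a ∈ S ∧ b ∉ S := by
  intro u v p
  induction p with
  | nil => intro hu hv; exact absurd hu hv
  | @cons x y _ hadj q ih =>
    intro hu hv
    by_cases hy : y ∈ S
    · obtain ⟨a, b, h1, h2, h3, h4⟩ := ih hy hv
      exact ⟨a, b, h1, by simp [h2], h3, h4⟩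
    · exact ⟨x, y, hadj, by simp, hu, hy⟩

/-- The exchange argument: replacing a tree edge `s(x,y)` by a non-tree edge `s(a,b)`
whose endpoints get disconnected by the removal of `s(x,y)` yields another spanning
tree. -/
private lemma exchange_tree [Fintype V] {G T : SimpleGraph V} (hle : T ≤ G) (hT : T.IsTree)
    {x y a b : V} (hxy : T.Adj x y) (hab : G.Adj a b) (hnab : s(a, b) ∉ T.edgeSet)
    (hnr : ¬(T.deleteEdges {s(x, y)}).Reachable a b) (w : Sym2 V → ℝ) :
    ∃ T₂ : SimpleGraph V, IsSpanningTree G T₂ ∧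
      totalWeight T₂ w + w s(x, y) = totalWeight T w + w s(a, b) := by
  classical
  set E : Set (Sym2 V) := (T.edgeSet \ {s(x, y)}) ∪ {s(a, b)} with hEdef
  set T₂ : SimpleGraph V := SimpleGraph.fromEdgeSet E with hT₂def
  set T' : SimpleGraph V := T.deleteEdges {s(x, y)} with hT'def
  have hT₂edge : T₂.edgeSet = E := by
    rw [hT₂def, SimpleGraph.edgeSet_fromEdgeSet]
    rw [_root_.sdiff_eq_self_iff_disjoint, Set.disjoint_left]
    rintro e hediag heE
    rcases heE with ⟨heT, -⟩ | heab
    · exact T.not_isDiag_of_mem_edgeSet heT hediag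
    · simp only [Set.mem_singleton_iff] at heab
      subst heab
      exact (by simpa using hab.ne : ¬(s(a, b) : Sym2 V).IsDiag) hediag
  have hT'le : T' ≤ T₂ := by
    intro p q hpq
    rw [hT'def, SimpleGraph.deleteEdges_adj] at hpq
    rw [hT₂def, SimpleGraph.fromEdgeSet_adj]
    exact ⟨Or.inl ⟨hpq.1, hpq.2⟩, hpq.1.ne⟩
  have hT₂ab : T₂.Adj a b := by
    rw [hT₂def, SimpleGraph.fromEdgeSet_adj]
    exact ⟨Or.inr rfl, hab.ne⟩
  have hreach : ∀ z : V, T'.Reachable z x ∨ T'.Reachable z y := fun z =>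
    reach_of_delete (hT.isConnected z x)
  -- x and y are connected in T₂ through the edge (a,b)
  have hxyreach : T₂.Reachable x y := by
    rcases hreach a with ha | ha <;> rcases hreach b with hb | hb
    · exact absurd (ha.trans hb.symm) hnr
    · exact ((ha.symm.mono hT'le).trans hT₂ab.reachable).trans (hb.mono hT'le)
    · exact ((hb.symm.mono hT'le).trans hT₂ab.symm.reachable).trans (ha.mono hT'le)
    · exact absurd (ha.trans hb.symm) hnr
  have hreach₂ : ∀ z : V, T₂.Reachable z x := by
    intro z
    rcases hreach z with h | h
    · exact h.mono hT'le
    · exact (h.mono hT'le).trans hxyreach.symm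
  have hconn : T₂.Connected := by
    rw [connected_iff]
    refine ⟨fun p q => (hreach₂ p).trans (hreach₂ q).symm, hT.isConnected.nonempty⟩
  have hacyc : T₂.IsAcyclic := by
    intro z c hc
    by_cases hf : s(a, b) ∈ c.edges
    · have hkey := SimpleGraph.adj_and_reachable_delete_edges_iff_exists_cycle.mpr
        ⟨z, c, hc, hf⟩
      have hle' : (T₂ \ SimpleGraph.fromEdgeSet {s(a, b)}) ≤ T' := by
        intro p q hpq
        obtain ⟨hpq₁, hpq₂⟩ := hpq
        rw [hT₂def, SimpleGraph.fromEdgeSet_adj] at hpq₁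
        have hne : s(p, q) ≠ s(a, b) := by
          intro h
          exact hpq₂ ((SimpleGraph.fromEdgeSet_adj _).mpr ⟨by simp [h], hpq₁.2⟩)
        have : s(p, q) ∈ T.edgeSet \ {s(x, y)} := by
          rcases hpq₁.1 with h | h
          · exact h
          · exact absurd h hne
        rw [hT'def, SimpleGraph.deleteEdges_adj]
        exact ⟨(SimpleGraph.mem_edgeSet _).mp this.1, this.2⟩
      exact hnr (hkey.2.mono hle')
    · have hsub : ∀ e ∈ c.edges, e ∈ T.edgeSet := by
        intro e he
        have h1 : e ∈ T₂.edgeSet := c.edges_subset_edgeSet he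
        rw [hT₂edge] at h1
        rcases h1 with h1 | h1
        · exact h1.1
        · simp only [Set.mem_singleton_iff] at h1
          exact absurd (h1 ▸ he) hf
      exact hT.IsAcyclic (c.transfer T hsub) (hc.transfer hsub)
  have hT₂le : T₂ ≤ G := by
    intro p q hpq
    rw [hT₂def, SimpleGraph.fromEdgeSet_adj] at hpq
    rcases hpq.1 with h | h
    · exact hle ((SimpleGraph.mem_edgeSet _).mp h.1)
    · simp only [Set.mem_singleton_iff] at h
      rw [← SimpleGraph.mem_edgeSet _, h]
      exact hab
  refine ⟨T₂, ⟨hT₂le, ⟨hconn, hacyc⟩⟩, ?_⟩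
  -- weight computation
  have hxyT : s(x, y) ∈ T.edgeSet.toFinite.toFinset := by
    rw [Set.Finite.mem_toFinset]; exact hxy
  have habT : s(a, b) ∉ (T.edgeSet.toFinite.toFinset.erase s(x, y)) := by
    simp only [Finset.mem_erase, Set.Finite.mem_toFinset]
    exact fun h => hnab h.2
  have hfin : T₂.edgeSet.toFinite.toFinset
      = insert s(a, b) (T.edgeSet.toFinite.toFinset.erase s(x, y)) := by
    ext e
    simp only [Set.Finite.mem_toFinset, hT₂edge, hEdef, Set.mem_union, Set.mem_diff,
      Set.mem_singleton_iff, Finset.mem_insert, Finset.mem_erase, Set.Finite.mem_toFinset]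
    tauto
  rw [totalWeight, totalWeight, hfin, Finset.sum_insert habT]
  have h2 := Finset.sum_erase_add (T.edgeSet.toFinite.toFinset) w hxyT
  linarith

/-- For the minimum spanning tree `T` of a finite connected graph `G` with injective
edge weights, an edge `e = uv` of `G` is not in `T` iff there is a path in `G` between
`u` and `v` all of whose edges have weight strictly less than `w e`. -/
theorem stmt_4 [Fintype V] (G : SimpleGraph V) (hG : G.Connected)
    (w : Sym2 V → ℝ) (hw : Set.InjOn w G.edgeSet)
    (T : SimpleGraph V) (hT : IsMinSpanningTree G T w)
    (u v : V) (huv : G.Adj u v) :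
    s(u, v) ∉ T.edgeSet ↔
      ∃ p : G.Walk u v, p.IsPath ∧ ∀ e' ∈ p.edges, w e' < w s(u, v) := by
  classical
  obtain ⟨⟨hTle, hTtree⟩, hTmin⟩ := hT
  constructor
  · intro he
    -- take the unique T-path from u to v
    obtain ⟨P, hP, hPuniq⟩ := hTtree.existsUnique_path u v
    have hsub : ∀ e ∈ P.edges, e ∈ G.edgeSet := fun e hePE =>
      SimpleGraph.edgeSet_mono hTle (P.edges_subset_edgeSet hePE)
    refine ⟨P.transfer G hsub, hP.transfer hsub, ?_⟩
    rw [P.edges_transfer hsub]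
    intro e' he'
    revert he'
    induction e' using Sym2.ind with
    | _ x y =>
      intro he'
      have hxy : T.Adj x y := (SimpleGraph.mem_edgeSet _).mp (P.edges_subset_edgeSet he')
      have hxyG : s(x, y) ∈ G.edgeSet := SimpleGraph.edgeSet_mono hTle hxy
      have hneq : s(x, y) ≠ s(u, v) := by
        intro h
        exact he (h ▸ ((SimpleGraph.mem_edgeSet _).mpr hxy))
      have hwne : w s(x, y) ≠ w s(u, v) := fun h => hneq (hw hxyG huv h)
      by_contra hlt
      push_neg at hlt
      have hgt : w s(u, v) < w s(x, y) := lt_of_le_of_ne hlt (Ne.symm hwne)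
      -- u,v are not reachable in T minus s(x,y), by uniqueness of the path P
      have hnr : ¬(T.deleteEdges {s(x, y)}).Reachable u v := by
        rintro ⟨q⟩
        have hqsub : ∀ e ∈ q.edges, e ∈ T.edgeSet := by
          intro e heq
          have := q.edges_subset_edgeSet heq
          rw [SimpleGraph.edgeSet_deleteEdges] at this
          exact this.1
        have hxy_not : s(x, y) ∉ q.edges := by
          intro hmem
          have := q.edges_subset_edgeSet hmem
          rw [SimpleGraph.edgeSet_deleteEdges] at this
          exact this.2 rfl
        set q' : T.Walk u v := q.transfer T hqsub with hq'def
        have hq'path : q'.toPath.val.IsPath := q'.toPath.prop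
        have heq1 : q'.toPath.val = P := hPuniq q'.toPath.val hq'path
        have : s(x, y) ∈ q'.edges := q'.edges_toPath_subset (by rw [heq1]; exact he')
        rw [hq'def, q.edges_transfer hqsub] at this
        exact hxy_not this
      obtain ⟨T₂, hsp, heqw⟩ := exchange_tree hTle hTtree hxy huv he hnr w
      have hmin := hTmin T₂ hsp
      linarith
  · rintro ⟨p, hp, hlt⟩ he
    have huvT : T.Adj u v := (SimpleGraph.mem_edgeSet _).mp he
    set T' : SimpleGraph V := T.deleteEdges {s(u, v)} with hT'def
    set S : Set V := {z | T'.Reachable u z} with hSdef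
    have huS : u ∈ S := Reachable.refl u
    have hvS : v ∉ S := by
      intro hr
      have hbridge : T.IsBridge s(u, v) :=
        (isAcyclic_iff_forall_adj_isBridge.mp hTtree.IsAcyclic) huvT
      rw [SimpleGraph.isBridge_iff] at hbridge
      exact hbridge hr
    obtain ⟨a, b, hab, hmem, haS, hbS⟩ := exists_boundary S p huS hvS
    have hwab : w s(a, b) < w s(u, v) := hlt _ hmem
    have hne : s(a, b) ≠ s(u, v) := fun h => by rw [h] at hwab; exact lt_irrefl _ hwab
    have hnT : s(a, b) ∉ T.edgeSet := by
      intro hmemT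
      have hT'adj : T'.Adj a b := by
        rw [hT'def, SimpleGraph.deleteEdges_adj]
        exact ⟨(SimpleGraph.mem_edgeSet _).mp hmemT, by simpa using hne⟩
      exact hbS (haS.trans hT'adj.reachable)
    have hnr : ¬T'.Reachable a b := fun hr => hbS (haS.trans hr)
    obtain ⟨T₂, hsp, heqw⟩ := exchange_tree hTle hTtree huvT hab hnT hnr w
    have hmin := hTmin T₂ hsp
    linarith
end

section
/- Let G be a finite connected simple graph with an injective edge-weight function w. Then the spanning subgraph of G whose edge set consists of exactly those edges e = uv for which there is no path in G between u and v using only edges of weight strictly less than w(e) is a minimum-weight spanning tree of G. -/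
open SimpleGraph Finset

variable {V : Type*}

/-- Lift reachability along walks: if every edge of `H` has `K`-reachable endpoints,
then `H`-walks give `K`-reachability. -/
lemma reach_of_walk {H K : SimpleGraph V} (h : ∀ a b : V, H.Adj a b → K.Reachable a b) :
    ∀ {u v : V}, H.Walk u v → K.Reachable u v := by
  intro u v p
  induction p with
  | nil => exact Reachable.refl _
  | cons ha _ ih => exact (h _ _ ha).trans ih

/-- After deleting one edge of a connected graph, every vertex reaches one of its endpoints. -/
lemma dichotomy {T' : SimpleGraph V} {x y : V} (hconn : T'.Connected) (z : V) :
    (T' \ fromEdgeSet {s(x,y)}).Reachable z x ∨ (T' \ fromEdgeSet {s(x,y)}).Reachable z y := by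
  have key : ∀ {c d : V}, T'.Walk c d →
      ((T' \ fromEdgeSet {s(x,y)}).Reachable d x ∨ (T' \ fromEdgeSet {s(x,y)}).Reachable d y) →
      ((T' \ fromEdgeSet {s(x,y)}).Reachable c x ∨ (T' \ fromEdgeSet {s(x,y)}).Reachable c y) := by
    intro c d q
    induction q with
    | nil => exact id
    | @cons a b c hab q ih =>
      intro h
      by_cases he : s(a, b) = s(x, y)
      · rw [Sym2.eq_iff] at he
        rcases he with ⟨h1, _⟩ | ⟨h1, _⟩
        · exact Or.inl (by rw [h1])
        · exact Or.inr (by rw [h1])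
      · have hadj : (T' \ fromEdgeSet {s(x,y)}).Adj a b := by
          rw [sdiff_adj]
          exact ⟨hab, fun hc => he ((fromEdgeSet_adj _).mp hc).1⟩
        rcases ih h with h' | h'
        · exact Or.inl (hadj.reachable.trans h')
        · exact Or.inr (hadj.reachable.trans h')
  exact key (hconn z x).some (Or.inl (Reachable.refl _))

/-- Along a walk from the `H`-reachable side of `x` to the unreachable side,
some edge crosses the cut. -/
lemma cross {G H : SimpleGraph V} {x : V} :
    ∀ {c d : V} (q : G.Walk c d), H.Reachable x c → ¬H.Reachable x d →
      ∃ a b : V, G.Adj a b ∧ s(a,b) ∈ q.edges ∧ H.Reachable x a ∧ ¬H.Reachable x b := by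
  intro c d q
  induction q with
  | nil => intro h1 h2; exact absurd h1 h2
  | @cons a b c hab q ih =>
    intro h1 h2
    by_cases hb : H.Reachable x b
    · obtain ⟨a', b', h⟩ := ih hb h2
      exact ⟨a', b', h.1, List.mem_cons_of_mem _ h.2.1, h.2.2⟩
    · exact ⟨a, b, hab, List.mem_cons_self, h1, hb⟩

/-- Exchanging an edge of a spanning tree for another edge that reconnects it. -/
lemma swap_tree [Fintype V] {G T' : SimpleGraph V} (hle : T' ≤ G) (htree : T'.IsTree)
    {x y u v : V} (hf : T'.Adj x y) (he : G.Adj u v) (hne : ¬T'.Adj u v)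
    (hux : (T' \ fromEdgeSet {s(x,y)}).Reachable u x)
    (hvy : (T' \ fromEdgeSet {s(x,y)}).Reachable v y) (w : Sym2 V → ℝ) :
    IsSpanningTree G (fromEdgeSet ((T'.edgeSet \ {s(x,y)}) ∪ {s(u,v)})) ∧
      totalWeight (fromEdgeSet ((T'.edgeSet \ {s(x,y)}) ∪ {s(u,v)})) w =
        totalWeight T' w - w s(x,y) + w s(u,v) := by
  classical
  set f := s(x,y) with hfdef
  set e := s(u,v) with hedef
  set T'' := fromEdgeSet ((T'.edgeSet \ {f}) ∪ {e}) with hT''def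
  have hfe : f ∈ T'.edgeSet := (mem_edgeSet T').mpr hf
  have hee : e ∉ T'.edgeSet := fun h => hne ((mem_edgeSet T').mp h)
  have hEdge : T''.edgeSet = (T'.edgeSet \ {f}) ∪ {e} := by
    rw [hT''def, edgeSet_fromEdgeSet]
    ext a
    refine ⟨fun h => h.1, fun h => ⟨h, ?_⟩⟩
    rcases h with ⟨ha, _⟩ | ha
    · exact T'.not_isDiag_of_mem_edgeSet ha
    · rw [Set.mem_singleton_iff] at ha
      subst ha
      exact G.not_isDiag_of_mem_edgeSet ((mem_edgeSet G).mpr he)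
  have hHT'' : (T' \ fromEdgeSet {f}) ≤ T'' := by
    intro a b hab
    rw [sdiff_adj] at hab
    rw [hT''def, fromEdgeSet_adj]
    refine ⟨Or.inl ⟨hab.1, fun hc => hab.2 ?_⟩, hab.1.ne⟩
    rw [fromEdgeSet_adj]
    exact ⟨hc, hab.1.ne⟩
  have hT''uv : T''.Adj u v := by
    rw [hT''def, fromEdgeSet_adj]
    exact ⟨Or.inr rfl, he.ne⟩
  have hxyT'' : T''.Reachable x y :=
    ((hux.mono hHT'').symm.trans (hT''uv.reachable)).trans (hvy.mono hHT'')
  have hT''G : T'' ≤ G := by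
    intro a b hab
    rw [hT''def, fromEdgeSet_adj] at hab
    rcases hab.1 with ⟨h1, _⟩ | h1
    · exact hle ((mem_edgeSet T').mp h1)
    · rw [Set.mem_singleton_iff, hedef, Sym2.eq_iff] at h1
      rcases h1 with ⟨rfl, rfl⟩ | ⟨rfl, rfl⟩
      · exact he
      · exact he.symm
  have hconn : T''.Connected := by
    haveI := htree.isConnected.nonempty
    apply Connected.mk
    intro a b
    refine reach_of_walk (H := T') (fun p q hpq => ?_) (htree.isConnected a b).some
    by_cases hq : s(p, q) = f
    · rw [hfdef, Sym2.eq_iff] at hq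
      rcases hq with ⟨rfl, rfl⟩ | ⟨rfl, rfl⟩
      · exact hxyT''
      · exact hxyT''.symm
    · refine Adj.reachable ?_
      rw [hT''def, fromEdgeSet_adj]
      exact ⟨Or.inl ⟨(mem_edgeSet T').mpr hpq, hq⟩, hpq.ne⟩
  have hacy : T''.IsAcyclic := by
    intro a c hc
    by_cases hm : e ∈ c.edges
    · have hkey : T''.Adj u v ∧ (T'' \ fromEdgeSet {s(u,v)}).Reachable u v :=
        adj_and_reachable_delete_edges_iff_exists_cycle.mpr ⟨a, c, hc, hm⟩
      have hle2 : (T'' \ fromEdgeSet {s(u,v)}) ≤ (T' \ fromEdgeSet {f}) := by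
        intro p q hpq
        rw [sdiff_adj] at hpq
        obtain ⟨h1, h2⟩ := hpq
        rw [hT''def, fromEdgeSet_adj] at h1
        have hpe : s(p,q) ≠ s(u,v) := fun hh =>
          h2 ((fromEdgeSet_adj _).mpr ⟨by rw [hh]; exact Set.mem_singleton _, h1.2⟩)
        rcases h1.1 with ⟨h3, h4⟩ | h3
        · rw [sdiff_adj]
          exact ⟨(mem_edgeSet T').mp h3, fun hc' => h4 ((fromEdgeSet_adj _).mp hc').1⟩
        · rw [Set.mem_singleton_iff, hedef] at h3
          exact absurd h3 hpe
      have hbr := isAcyclic_iff_forall_adj_isBridge.mp htree.IsAcyclic hf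
      have hreach : (T' \ fromEdgeSet {f}).Reachable x y :=
        (hux.symm.trans (hkey.2.mono hle2)).trans hvy
      rw [hfdef] at hreach
      exact isBridge_iff.mp hbr hreach
    · have hsub : ∀ e' ∈ c.edges, e' ∈ T'.edgeSet := by
        intro e' he'
        have h1 := c.edges_subset_edgeSet he'
        rw [hEdge] at h1
        rcases h1 with ⟨h2, _⟩ | h2
        · exact h2
        · rw [Set.mem_singleton_iff] at h2
          exact absurd (h2 ▸ he') hm
      exact htree.IsAcyclic (c.transfer T' hsub) (hc.transfer hsub)
  refine ⟨⟨hT''G, ⟨hconn, hacy⟩⟩, ?_⟩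
  have hfin : T''.edgeSet.toFinite.toFinset
      = insert e ((T'.edgeSet.toFinite.toFinset).erase f) := by
    ext a
    simp only [Set.Finite.mem_toFinset, hEdge, Set.mem_union, Set.mem_diff,
      Set.mem_singleton_iff, Finset.mem_insert, Finset.mem_erase]
    tauto
  have henotin : e ∉ (T'.edgeSet.toFinite.toFinset).erase f := by
    intro hc
    exact hee (Set.Finite.mem_toFinset _ |>.mp (Finset.mem_of_mem_erase hc))
  have hfin' : f ∈ T'.edgeSet.toFinite.toFinset := Set.Finite.mem_toFinset _ |>.mpr hfe
  rw [totalWeight, totalWeight, hfin, Finset.sum_insert henotin,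
    Finset.sum_erase_eq_sub hfin']
  ring

/-- The spanning subgraph of a finite connected graph `G` (with injective edge weights)
whose edges are exactly those edges `uv` of `G` for which there is no path in `G`
between `u` and `v` using only edges of weight strictly less than `w (uv)` is a
minimum spanning tree of `G`. -/
theorem stmt_5 [Fintype V] (G : SimpleGraph V) (hG : G.Connected)
    (w : Sym2 V → ℝ) (hw : Set.InjOn w G.edgeSet)
    (T : SimpleGraph V)
    (hT : ∀ u v : V, T.Adj u v ↔
      (G.Adj u v ∧
        ¬ ∃ p : G.Walk u v, p.IsPath ∧ ∀ e' ∈ p.edges, w e' < w s(u, v))) :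
    IsMinSpanningTree G T w := by
  classical
  haveI : Nonempty V := hG.nonempty
  have hTG : T ≤ G := fun a b hab => ((hT a b).mp hab).1
  -- every edge of G has T-reachable endpoints
  have hedge_reach : ∀ u v : V, G.Adj u v → T.Reachable u v := by
    have key : ∀ n : ℕ, ∀ u v : V, G.Adj u v →
        ((G.edgeSet.toFinite.toFinset).filter (fun e' => w e' < w s(u,v))).card ≤ n →
        T.Reachable u v := by
      intro n
      induction n using Nat.strong_induction_on with
      | _ n ih =>
        intro u v huv hcard
        by_cases ht : T.Adj u v
        · exact ht.reachable
        · have hex : ∃ p : G.Walk u v, p.IsPath ∧ ∀ e' ∈ p.edges, w e' < w s(u,v) := by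
            by_contra hno
            exact ht ((hT u v).mpr ⟨huv, hno⟩)
          obtain ⟨p, _, hlight⟩ := hex
          refine reach_of_walk
            (H := fromEdgeSet {e' | e' ∈ G.edgeSet ∧ w e' < w s(u,v)})
            (fun a b hab => ?_) (p.transfer _ ?_)
          · rw [fromEdgeSet_adj] at hab
            obtain ⟨⟨haG, hwlt⟩, _⟩ := hab
            have haGadj : G.Adj a b := (mem_edgeSet G).mp haG
            have hlt : ((G.edgeSet.toFinite.toFinset).filter
                (fun e' => w e' < w s(a,b))).card <
                ((G.edgeSet.toFinite.toFinset).filter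
                (fun e' => w e' < w s(u,v))).card := by
              apply Finset.card_lt_card
              rw [Finset.ssubset_iff_of_subset]
              · refine ⟨s(a,b), ?_, ?_⟩
                · rw [Finset.mem_filter]
                  exact ⟨Set.Finite.mem_toFinset _ |>.mpr haG, hwlt⟩
                · rw [Finset.mem_filter]
                  exact fun hcc => lt_irrefl _ hcc.2
              · intro z hz
                rw [Finset.mem_filter] at hz ⊢
                exact ⟨hz.1, hz.2.trans hwlt⟩
            exact ih _ (lt_of_lt_of_le hlt hcard) a b haGadj le_rfl
          · intro e' he'
            rw [edgeSet_fromEdgeSet]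
            exact ⟨⟨p.edges_subset_edgeSet he', hlight e' he'⟩,
              G.not_isDiag_of_mem_edgeSet (p.edges_subset_edgeSet he')⟩
    exact fun u v huv => key _ u v huv le_rfl
  have hTconn : T.Connected := by
    apply Connected.mk
    intro a b
    exact reach_of_walk hedge_reach (hG.preconnected a b).some
  -- T is acyclic
  have hTacy : T.IsAcyclic := by
    intro a c hc
    have hnonempty : c.edges.toFinset.Nonempty := by
      have h3 := hc.three_le_length
      have : c.edges ≠ [] := by
        intro hnil
        have := c.length_edges
        rw [hnil] at this
        simp at this
        omega
      obtain ⟨e0, he0⟩ := List.exists_mem_of_ne_nil _ this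
      exact ⟨e0, List.mem_toFinset.mpr he0⟩
    obtain ⟨f, hfmem, hfmax⟩ := Finset.exists_max_image c.edges.toFinset w hnonempty
    revert hfmem hfmax
    refine Sym2.ind (fun x y hfmem hfmax => ?_) f
    have hfmem' : s(x,y) ∈ c.edges := List.mem_toFinset.mp hfmem
    have hTxy : T.Adj x y := c.adj_of_mem_edges hfmem'
    set C : SimpleGraph V := fromEdgeSet {e' | e' ∈ c.edges} with hCdef
    have hsubC : ∀ e' ∈ c.edges, e' ∈ C.edgeSet := by
      intro e' he'
      rw [hCdef, edgeSet_fromEdgeSet]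
      exact ⟨he', T.not_isDiag_of_mem_edgeSet (c.edges_subset_edgeSet he')⟩
    have hkey := adj_and_reachable_delete_edges_iff_exists_cycle.mpr
      ⟨a, c.transfer C hsubC, hc.transfer hsubC,
        by rw [Walk.edges_transfer]; exact hfmem'⟩
    obtain ⟨q⟩ := hkey.2
    have hqedges : ∀ e' ∈ q.edges, e' ∈ c.edges ∧ e' ≠ s(x,y) := by
      intro e' he'
      have h1 := q.edges_subset_edgeSet he'
      rw [edgeSet_deleteEdges, hCdef, edgeSet_fromEdgeSet] at h1
      obtain ⟨⟨h2, h3⟩, h4⟩ := h1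
      refine ⟨h2, fun hh => h4 ?_⟩
      exact hh ▸ Set.mem_singleton _
    have hqG : ∀ e' ∈ q.edges, e' ∈ G.edgeSet := by
      intro e' he'
      exact edgeSet_mono hTG (c.edges_subset_edgeSet (hqedges e' he').1)
    set q' : G.Walk x y := q.transfer G hqG with hq'def
    refine ((hT x y).mp hTxy).2 ⟨(q'.toPath : G.Walk x y), (q'.toPath).2, ?_⟩
    intro e' he'
    have he'q : e' ∈ q.edges := by
      have := q'.edges_toPath_subset he'
      rwa [hq'def, Walk.edges_transfer] at this
    obtain ⟨hec, hene⟩ := hqedges e' he'q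
    have hle : w e' ≤ w s(x,y) := hfmax e' (List.mem_toFinset.mpr hec)
    rcases lt_or_eq_of_le hle with h | h
    · exact h
    · exact absurd (hw (edgeSet_mono hTG (c.edges_subset_edgeSet hec))
        (edgeSet_mono hTG ((mem_edgeSet T).mpr hTxy)) h) hene
  have hTtree : T.IsTree := ⟨hTconn, hTacy⟩
  -- counting edges of spanning trees
  haveI : Finite (SimpleGraph V) := Finite.of_injective _ SimpleGraph.adj_injective
  have hcard_edges : ∀ (S : SimpleGraph V), S.IsTree →
      S.edgeSet.toFinite.toFinset.card + 1 = Fintype.card V := by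
    intro S hS
    haveI : Fintype S.edgeSet := S.edgeSet.toFinite.fintype
    have h1 := hS.card_edgeFinset
    have h2 : S.edgeSet.toFinite.toFinset = S.edgeFinset := by
      ext a
      rw [Set.Finite.mem_toFinset, mem_edgeFinset]
    rw [h2]
    exact h1
  -- minimality by induction on the number of strictly better spanning trees
  have hmin : ∀ n : ℕ, ∀ T' : SimpleGraph V, IsSpanningTree G T' →
      ({S : SimpleGraph V | IsSpanningTree G S ∧
        totalWeight S w < totalWeight T' w}).toFinite.toFinset.card ≤ n →
      totalWeight T w ≤ totalWeight T' w := by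
    intro n
    induction n using Nat.strong_induction_on with
    | _ n ih =>
      intro T' hT' hn
      by_cases hsub : T'.edgeSet ⊆ T.edgeSet
      · have h1 : T'.edgeSet.toFinite.toFinset ⊆ T.edgeSet.toFinite.toFinset := by
          intro a ha
          rw [Set.Finite.mem_toFinset] at ha ⊢
          exact hsub ha
        have hcard : T.edgeSet.toFinite.toFinset.card ≤
            T'.edgeSet.toFinite.toFinset.card := by
          have e1 := hcard_edges T hTtree
          have e2 := hcard_edges T' hT'.2
          omega
        have hfeq := Finset.eq_of_subset_of_card_le h1 hcard
        have hTeq : T' = T := by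
          rw [← edgeSet_inj]
          ext z
          rw [← Set.Finite.mem_toFinset T'.edgeSet.toFinite, hfeq,
            Set.Finite.mem_toFinset]
        rw [hTeq]
      · obtain ⟨f, hfT', hfT⟩ := Set.not_subset.mp hsub
        revert hfT' hfT
        refine Sym2.ind (fun x y hfT' hfT => ?_) f
        have hxyT' : T'.Adj x y := (mem_edgeSet T').mp hfT'
        have hnxy : ¬T.Adj x y := fun h => hfT ((mem_edgeSet T).mpr h)
        have hGxy : G.Adj x y := hT'.1 hxyT'
        obtain ⟨p, _, hlight⟩ :
            ∃ p : G.Walk x y, p.IsPath ∧ ∀ e' ∈ p.edges, w e' < w s(x,y) := by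
          by_contra hno
          exact hnxy ((hT x y).mpr ⟨hGxy, hno⟩)
        have hbr := isAcyclic_iff_forall_adj_isBridge.mp hT'.2.IsAcyclic hxyT'
        have hnotxy : ¬(T' \ fromEdgeSet {s(x,y)}).Reachable x y :=
          isBridge_iff.mp hbr
        obtain ⟨aa, bb, hGab, habp, hxa, hxb⟩ :=
          cross (H := T' \ fromEdgeSet {s(x,y)}) p (Reachable.refl x) hnotxy
        have hwab : w s(aa,bb) < w s(x,y) := hlight _ habp
        have hnab : ¬T'.Adj aa bb := by
          intro hadj
          have hne2 : s(aa,bb) ≠ s(x,y) := fun hh => by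
            rw [hh] at hwab; exact lt_irrefl _ hwab
          have hadj2 : (T' \ fromEdgeSet {s(x,y)}).Adj aa bb := by
            rw [sdiff_adj]
            exact ⟨hadj, fun hc => hne2 ((fromEdgeSet_adj _).mp hc).1⟩
          exact hxb (hxa.trans hadj2.reachable)
        have hby : (T' \ fromEdgeSet {s(x,y)}).Reachable bb y := by
          rcases dichotomy hT'.2.isConnected bb with h | h
          · exact absurd h.symm hxb
          · exact h
        obtain ⟨hsp, heq⟩ := swap_tree hT'.1 hT'.2 hxyT' hGab hnab hxa.symm hby w
        set T'' := fromEdgeSet ((T'.edgeSet \ {s(x,y)}) ∪ {s(aa,bb)}) with hT''def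
        have hlt : totalWeight T'' w < totalWeight T' w := by
          rw [heq]; linarith
        have hss : ({S : SimpleGraph V | IsSpanningTree G S ∧
              totalWeight S w < totalWeight T'' w}).toFinite.toFinset ⊂
            ({S : SimpleGraph V | IsSpanningTree G S ∧
              totalWeight S w < totalWeight T' w}).toFinite.toFinset := by
          rw [Finset.ssubset_iff_of_subset]
          · refine ⟨T'', ?_, ?_⟩
            · rw [Set.Finite.mem_toFinset]
              exact ⟨hsp, hlt⟩
            · rw [Set.Finite.mem_toFinset]
              exact fun hcc => lt_irrefl _ hcc.2
          · intro z hz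
            rw [Set.Finite.mem_toFinset] at hz ⊢
            exact ⟨hz.1, hz.2.trans hlt⟩
        have hmlt := Finset.card_lt_card hss
        exact le_trans (ih _ (lt_of_lt_of_le hmlt hn) T'' hsp le_rfl) (le_of_lt hlt)
  exact ⟨⟨hTG, hTtree⟩, fun T' hT' => hmin _ T' hT' le_rfl⟩
end
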